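/- (Commutation of Exp with blow-up.) Let X be a formal vector field on C^2 of order ≥ 2 and F = Exp(X) the associated tangent-to-identity formal diffeomorphism. Let p = (0, v_0) be a characteristic direction of F (equivalently a point of the tangent cone of X) in the blow-up chart π(x,v) = (x, xv). Then the lift F̃ of F and the pullback X̃ of X satisfy F̃_p = Exp(X̃_p): the germ of the lifted diffeomorphism at p is the exponential of the germ of the pulled-back vector field. -/

import Mathlib

open Finsupp

noncomputable section

abbrev F2 : Type := MvPowerSeries (Fin 2) ℂ

/-- total degree of a monomial exponent -/
def deg (d : Fin 2 →₀ ℕ) : ℕ := d 0 + d 1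

/-- the exponent (m, n) -/
def idx (m n : ℕ) : Fin 2 →₀ ℕ := Finsupp.single 0 m + Finsupp.single 1 n

/-- partial derivative of a formal power series -/
def pd (i : Fin 2) (f : F2) : F2 :=
  fun d => ((d i : ℂ) + 1) * MvPowerSeries.coeff (d + Finsupp.single i 1) f

/-- the derivation a ∂/∂x + b ∂/∂y applied to g -/
def vf (a b g : F2) : F2 := a * pd 0 g + b * pd 1 g

/-- `ordGE f k` : the order ν(f) is at least k -/
def ordGE (f : F2) (k : ℕ) : Prop :=
  ∀ d : Fin 2 →₀ ℕ, deg d < k → MvPowerSeries.coeff d f = 0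

/-- exp X (g) = Σ_j (1/j!) X^j(g), coefficientwise -/
def expX (a b g : F2) : F2 :=
  fun d => ∑' j : ℕ, ((j.factorial : ℂ))⁻¹ * MvPowerSeries.coeff d ((vf a b)^[j] g)

/-- degree-k homogeneous part -/
def HT (k : ℕ) (f : F2) : F2 :=
  fun d => if deg d = k then MvPowerSeries.coeff d f else 0

/-- substitution y := x·v :  f(x, xv), in coordinates (x, v) -/
def blowup (f : F2) : F2 :=
  fun d => if d 1 ≤ d 0 then MvPowerSeries.coeff (idx (d 0 - d 1) (d 1)) f else 0

/-- `dehom k f` = f_k(1, v), where f_k is the degree-k homogeneous part of f -/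
def dehom (k : ℕ) (f : F2) : F2 :=
  fun d => if d 0 = 0 ∧ d 1 ≤ k then MvPowerSeries.coeff (idx (k - d 1) (d 1)) f else 0

/-- evaluation of the degree-k homogeneous part of f at (1, v0) -/
def evk (k : ℕ) (v0 : ℂ) (f : F2) : ℂ :=
  ∑ n ∈ Finset.range (k+1), MvPowerSeries.coeff (idx (k-n) n) f * v0 ^ n

/-- the linear change of coordinates f(x, y) ↦ f(x, y + v0·x) -/
def shear (v0 : ℂ) (f : F2) : F2 :=
  fun d => ∑ j ∈ Finset.range (deg d + 1),
    if d 1 ≤ j ∧ j - d 1 ≤ d 0 then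
      (j.choose (d 1) : ℂ) * v0 ^ (j - d 1) *
        MvPowerSeries.coeff (idx (d 0 - (j - d 1)) j) f
    else 0

/-- the coordinate x -/
def Xv : F2 := MvPowerSeries.X 0
/-- the coordinate y (alias v in the blow-up chart) -/
def Yv : F2 := MvPowerSeries.X 1

end

noncomputable section

@[simp] lemma idx_apply0 (m n : ℕ) : idx m n 0 = m := by simp [idx]
@[simp] lemma idx_apply1 (m n : ℕ) : idx m n 1 = n := by simp [idx]

lemma fin2_cases (i : Fin 2) : i = 0 ∨ i = 1 := by omega

lemma idx_eta (d : Fin 2 →₀ ℕ) : idx (d 0) (d 1) = d := by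
  ext i
  rcases fin2_cases i with h | h <;> subst h <;> simp

@[simp] lemma idx_add (m n p q : ℕ) : idx m n + idx p q = idx (m+p) (n+q) := by
  ext i; rcases fin2_cases i with h | h <;> subst h <;> simp

lemma idx_inj {m n p q : ℕ} : idx m n = idx p q ↔ m = p ∧ n = q := by
  constructor
  · intro h
    constructor
    · have := congrArg (fun d => d 0) h; simpa using this
    · have := congrArg (fun d => d 1) h; simpa using this
  · rintro ⟨rfl, rfl⟩; rfl

lemma idx_le {m n p q : ℕ} : idx m n ≤ idx p q ↔ m ≤ p ∧ n ≤ q := by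
  rw [Finsupp.le_def]
  constructor
  · intro h; exact ⟨by simpa using h 0, by simpa using h 1⟩
  · intro ⟨h1, h2⟩ i; rcases fin2_cases i with h | h <;> subst h <;> simpa

lemma idx_sub (m n p q : ℕ) : idx m n - idx p q = idx (m-p) (n-q) := by
  ext i; rcases fin2_cases i with h | h <;> subst h <;> simp [Finsupp.tsub_apply]

@[simp] lemma deg_idx (m n : ℕ) : deg (idx m n) = m + n := by simp [deg]

lemma single01 : Finsupp.single (0 : Fin 2) 1 = idx 1 0 := by
  ext i; rcases fin2_cases i with h | h <;> subst h <;> simp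
lemma single11 : Finsupp.single (1 : Fin 2) 1 = idx 0 1 := by
  ext i; rcases fin2_cases i with h | h <;> subst h <;> simp

lemma coeff_def (f : F2) (d : Fin 2 →₀ ℕ) : MvPowerSeries.coeff d f = f d := rfl

lemma half (f g : F2) (i : Fin 2) (d : Fin 2 →₀ ℕ) :
    ∑ p ∈ Finset.HasAntidiagonal.antidiagonal (d + Finsupp.single i 1),
        (fun p : (Fin 2 →₀ ℕ) × (Fin 2 →₀ ℕ) => (p.1 i : ℂ) * (f p.1 * g p.2)) p
      = ∑ p ∈ Finset.HasAntidiagonal.antidiagonal d,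
          (fun p : (Fin 2 →₀ ℕ) × (Fin 2 →₀ ℕ) =>
            ((p.1 i : ℂ) + 1) * (f (p.1 + Finsupp.single i 1) * g p.2)) p := by
  set e := Finsupp.single i 1 with he
  rw [← Finset.sum_filter_of_ne (p := fun p => e ≤ p.1)]
  · refine Finset.sum_nbij' (i := fun p => (p.1 - e, p.2)) (j := fun p => (p.1 + e, p.2))
      ?_ ?_ ?_ ?_ ?_
    · intro p hp
      simp only [Finset.mem_filter, Finset.HasAntidiagonal.mem_antidiagonal] at hp
      rw [Finset.HasAntidiagonal.mem_antidiagonal]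
      show p.1 - e + p.2 = d
      rw [tsub_add_eq_add_tsub hp.2, hp.1, add_tsub_cancel_right]
    · intro p hp
      rw [Finset.HasAntidiagonal.mem_antidiagonal] at hp
      simp only [Finset.mem_filter, Finset.HasAntidiagonal.mem_antidiagonal]
      constructor
      · show p.1 + e + p.2 = d + e
        rw [add_right_comm, hp]
      · exact le_add_self
    · intro p hp
      simp only [Finset.mem_filter, Finset.HasAntidiagonal.mem_antidiagonal] at hp
      show (p.1 - e + e, p.2) = p
      rw [tsub_add_cancel_of_le hp.2]
    · intro p hp
      show (p.1 + e - e, p.2) = p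
      rw [add_tsub_cancel_right]
    · intro p hp
      simp only [Finset.mem_filter, Finset.HasAntidiagonal.mem_antidiagonal] at hp
      have h1 : ((p.1 - e) i : ℂ) + 1 = (p.1 i : ℂ) := by
        have h3 : 1 ≤ p.1 i := by simpa [he] using hp.2 i
        have h2 : (p.1 - e) i = p.1 i - 1 := by simp [Finsupp.tsub_apply, he]
        rw [h2, Nat.cast_sub h3]
        push_cast
        ring
      show (p.1 i : ℂ) * (f p.1 * g p.2)
          = ((p.1 - e) i + 1 : ℂ) * (f (p.1 - e + e) * g p.2)
      rw [tsub_add_cancel_of_le hp.2, h1]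
  · intro p _ hne
    by_contra hc
    apply hne
    have : p.1 i = 0 := by
      by_contra h0
      exact hc (by rwa [he, Finsupp.single_le_iff, Nat.one_le_iff_ne_zero])
    simp [this]

abbrev PP : Type := (Fin 2 →₀ ℕ) × (Fin 2 →₀ ℕ)

lemma sum_swap_anti (n : Fin 2 →₀ ℕ) (F : PP → ℂ) :
    Finset.sum (Finset.HasAntidiagonal.antidiagonal n) F
      = Finset.sum (Finset.HasAntidiagonal.antidiagonal n) (fun p : PP => F p.swap) := by
  refine Finset.sum_nbij' (i := Prod.swap) (j := Prod.swap) ?_ ?_ ?_ ?_ ?_ <;>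
    intro p hp <;> simp_all [Finset.swap_mem_antidiagonal, add_comm]

lemma pd_mul (i : Fin 2) (f g : F2) : pd i (f * g) = pd i f * g + f * pd i g := by
  funext d
  have hL : pd i (f * g) d
      = Finset.sum (Finset.HasAntidiagonal.antidiagonal (d + Finsupp.single i 1))
          (fun p : PP => ((p.1 i : ℂ) + (p.2 i : ℂ)) * (f p.1 * g p.2)) := by
    show ((d i : ℂ) + 1) * MvPowerSeries.coeff (d + Finsupp.single i 1) (f * g) = _
    rw [MvPowerSeries.coeff_mul, Finset.mul_sum]
    refine Finset.sum_congr rfl fun p hp => ?_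
    rw [Finset.HasAntidiagonal.mem_antidiagonal] at hp
    have h1 : p.1 i + p.2 i = d i + 1 := by
      have := congrArg (fun x => x i) hp; simpa using this
    have h2 : (p.1 i : ℂ) + (p.2 i : ℂ) = (d i : ℂ) + 1 := by exact_mod_cast h1
    rw [coeff_def, coeff_def, h2]
  have hR : (pd i f * g + f * pd i g) d
      = (Finset.sum (Finset.HasAntidiagonal.antidiagonal d)
          (fun p : PP => ((p.1 i : ℂ) + 1) * (f (p.1 + Finsupp.single i 1) * g p.2)))
        + Finset.sum (Finset.HasAntidiagonal.antidiagonal d)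
          (fun p : PP => ((p.2 i : ℂ) + 1) * (f p.1 * g (p.2 + Finsupp.single i 1))) := by
    show MvPowerSeries.coeff d (pd i f * g + f * pd i g) = _
    rw [map_add, MvPowerSeries.coeff_mul, MvPowerSeries.coeff_mul]
    congr 1
    · refine Finset.sum_congr rfl fun p hp => ?_
      show ((p.1 i : ℂ) + 1) * MvPowerSeries.coeff (p.1 + Finsupp.single i 1) f * g p.2 = _
      rw [coeff_def]; ring
    · refine Finset.sum_congr rfl fun p hp => ?_
      show f p.1 * (((p.2 i : ℂ) + 1) * MvPowerSeries.coeff (p.2 + Finsupp.single i 1) g) = _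
      rw [coeff_def]; ring
  rw [hL, hR]
  have hsplit : Finset.sum (Finset.HasAntidiagonal.antidiagonal (d + Finsupp.single i 1))
          (fun p : PP => ((p.1 i : ℂ) + (p.2 i : ℂ)) * (f p.1 * g p.2))
      = (Finset.sum (Finset.HasAntidiagonal.antidiagonal (d + Finsupp.single i 1))
          (fun p : PP => (p.1 i : ℂ) * (f p.1 * g p.2)))
        + Finset.sum (Finset.HasAntidiagonal.antidiagonal (d + Finsupp.single i 1))
          (fun p : PP => (p.2 i : ℂ) * (f p.1 * g p.2)) := by
    rw [← Finset.sum_add_distrib]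
    exact Finset.sum_congr rfl fun p _ => by ring
  rw [hsplit, half f g i d]
  congr 1
  calc Finset.sum (Finset.HasAntidiagonal.antidiagonal (d + Finsupp.single i 1))
          (fun p : PP => (p.2 i : ℂ) * (f p.1 * g p.2))
      = Finset.sum (Finset.HasAntidiagonal.antidiagonal (d + Finsupp.single i 1))
          (fun p : PP => (p.1 i : ℂ) * (g p.1 * f p.2)) := by
        rw [sum_swap_anti _ (fun p : PP => (p.1 i : ℂ) * (g p.1 * f p.2))]
        exact Finset.sum_congr rfl fun p _ => by
          simp only [Prod.fst_swap, Prod.snd_swap]; ring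
    _ = Finset.sum (Finset.HasAntidiagonal.antidiagonal d)
          (fun p : PP => ((p.1 i : ℂ) + 1) * (g (p.1 + Finsupp.single i 1) * f p.2)) :=
        half g f i d
    _ = Finset.sum (Finset.HasAntidiagonal.antidiagonal d)
          (fun p : PP => ((p.2 i : ℂ) + 1) * (f p.1 * g (p.2 + Finsupp.single i 1))) := by
        rw [sum_swap_anti _ (fun p : PP => ((p.2 i : ℂ) + 1) * (f p.1 * g (p.2 + Finsupp.single i 1)))]
        exact Finset.sum_congr rfl fun p _ => by
          simp only [Prod.fst_swap, Prod.snd_swap]; ring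

lemma smul_def (c : ℂ) (f : F2) (d : Fin 2 →₀ ℕ) : (c • f) d = c * f d := rfl
lemma add_def (f g : F2) (d : Fin 2 →₀ ℕ) : (f + g) d = f d + g d := rfl
lemma sub_def (f g : F2) (d : Fin 2 →₀ ℕ) : (f - g) d = f d - g d := rfl

lemma pd_add (i : Fin 2) (f g : F2) : pd i (f + g) = pd i f + pd i g := by
  funext d
  show ((d i : ℂ) + 1) * (f + g) (d + Finsupp.single i 1) = _
  rw [add_def, add_def]
  show _ = ((d i : ℂ) + 1) * f (d + Finsupp.single i 1)
    + ((d i : ℂ) + 1) * g (d + Finsupp.single i 1)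
  ring

lemma pd_smul (i : Fin 2) (c : ℂ) (f : F2) : pd i (c • f) = c • pd i f := by
  funext d
  show ((d i : ℂ) + 1) * (c • f) (d + Finsupp.single i 1) = _
  rw [smul_def, smul_def]
  show _ = c * (((d i : ℂ) + 1) * f (d + Finsupp.single i 1))
  ring

/-- the derivation as a linear map -/
def VF (a b : F2) : F2 →ₗ[ℂ] F2 where
  toFun := vf a b
  map_add' f g := by
    show a * pd 0 (f + g) + b * pd 1 (f + g) = _
    rw [pd_add, pd_add]
    show _ = (a * pd 0 f + b * pd 1 f) + (a * pd 0 g + b * pd 1 g)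
    ring
  map_smul' c f := by
    show a * pd 0 (c • f) + b * pd 1 (c • f) = _
    rw [pd_smul, pd_smul]
    show _ = c • (a * pd 0 f + b * pd 1 f)
    rw [smul_add]
    rw [mul_smul_comm, mul_smul_comm]

lemma VF_iterate (a b : F2) (j : ℕ) (g : F2) : ((VF a b) ^ j) g = (vf a b)^[j] g := by
  rw [Module.End.pow_apply]
  rfl

lemma vf_mul (a b f g : F2) : vf a b (f * g) = vf a b f * g + f * vf a b g := by
  unfold vf
  rw [pd_mul, pd_mul]
  ring

lemma iter_leibniz (a b f g : F2) (j : ℕ) :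
    (vf a b)^[j] (f * g) = ∑ i ∈ Finset.range (j + 1),
      (j.choose i : ℂ) • ((vf a b)^[i] f * (vf a b)^[j - i] g) := by
  induction j with
  | zero => simp
  | succ j ih =>
    rw [Function.iterate_succ_apply', ih]
    have hD : ∀ h : F2, vf a b h = VF a b h := fun _ => rfl
    rw [hD, map_sum]
    have step : ∀ i ∈ Finset.range (j + 1),
        VF a b ((j.choose i : ℂ) • ((vf a b)^[i] f * (vf a b)^[j - i] g))
        = (j.choose i : ℂ) • ((vf a b)^[i+1] f * (vf a b)^[j - i] g)
          + (j.choose i : ℂ) • ((vf a b)^[i] f * (vf a b)^[(j - i) + 1] g) := by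
      intro i _
      rw [map_smul]
      rw [← hD, vf_mul, smul_add]
      rw [Function.iterate_succ_apply', Function.iterate_succ_apply']
    rw [Finset.sum_congr rfl step, Finset.sum_add_distrib]
    -- second sum: for i ≤ j, (j-i)+1 = (j+1)-i
    have h2 : ∑ i ∈ Finset.range (j + 1),
        (j.choose i : ℂ) • ((vf a b)^[i] f * (vf a b)^[(j - i) + 1] g)
        = ∑ i ∈ Finset.range (j + 1),
          (j.choose i : ℂ) • ((vf a b)^[i] f * (vf a b)^[(j + 1) - i] g) := by
      refine Finset.sum_congr rfl fun i hi => ?_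
      rw [Finset.mem_range] at hi
      have : j - i + 1 = j + 1 - i := by omega
      rw [this]
    rw [h2]
    -- extend second sum to range (j+2): extra term has choose (j+1) = 0... it is choose j (j+1) = 0
    have h3 : ∑ i ∈ Finset.range (j + 1),
        (j.choose i : ℂ) • ((vf a b)^[i] f * (vf a b)^[(j + 1) - i] g)
        = ∑ i ∈ Finset.range (j + 2),
          (j.choose i : ℂ) • ((vf a b)^[i] f * (vf a b)^[(j + 1) - i] g) := by
      rw [Finset.sum_range_succ (n := j + 1)]
      simp [Nat.choose_succ_self]
    rw [h3]
    -- first sum: reindex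
    have h4 : ∑ i ∈ Finset.range (j + 2),
        ((j + 1).choose i : ℂ) • ((vf a b)^[i] f * (vf a b)^[(j + 1) - i] g)
        = (∑ i ∈ Finset.range (j + 1),
            ((j + 1).choose (i + 1) : ℂ) • ((vf a b)^[i + 1] f * (vf a b)^[j - i] g))
          + ((j + 1).choose 0 : ℂ) • ((vf a b)^[0] f * (vf a b)^[j + 1] g) := by
      rw [Finset.sum_range_succ' (n := j + 1)]
      congr 1
      refine Finset.sum_congr rfl fun i hi => ?_
      rw [Finset.mem_range] at hi
      have : j + 1 - (i + 1) = j - i := by omega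
      rw [this]
    rw [h4]
    have h5 : ∑ i ∈ Finset.range (j + 2),
        (j.choose i : ℂ) • ((vf a b)^[i] f * (vf a b)^[(j + 1) - i] g)
        = (∑ i ∈ Finset.range (j + 1),
            (j.choose (i + 1) : ℂ) • ((vf a b)^[i + 1] f * (vf a b)^[j - i] g))
          + (j.choose 0 : ℂ) • ((vf a b)^[0] f * (vf a b)^[j + 1] g) := by
      rw [Finset.sum_range_succ' (n := j + 1)]
      congr 1
      refine Finset.sum_congr rfl fun i hi => ?_
      rw [Finset.mem_range] at hi
      have : j + 1 - (i + 1) = j - i := by omega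
      rw [this]
    rw [h5, ← add_assoc, ← Finset.sum_add_distrib]
    have h6 : ∀ i ∈ Finset.range (j + 1),
        (j.choose i : ℂ) • ((vf a b)^[i + 1] f * (vf a b)^[j - i] g)
          + (j.choose (i + 1) : ℂ) • ((vf a b)^[i + 1] f * (vf a b)^[j - i] g)
        = ((j + 1).choose (i + 1) : ℂ) • ((vf a b)^[i + 1] f * (vf a b)^[j - i] g) := by
      intro i _
      rw [← add_smul]
      congr 1
      rw [Nat.choose_succ_succ]
      push_cast
      ring
    rw [Finset.sum_congr rfl h6]
    simp

/-- x-order: every monomial has x-exponent ≥ k -/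
def wOrdGE (f : F2) (k : ℕ) : Prop := ∀ d : Fin 2 →₀ ℕ, d 0 < k → f d = 0

lemma deg_add' (u v : Fin 2 →₀ ℕ) : deg (u + v) = deg u + deg v := by
  simp [deg, Finsupp.add_apply]; ring

lemma deg_single' (i : Fin 2) : deg (Finsupp.single i 1) = 1 := by
  rcases fin2_cases i with h | h <;> subst h <;> simp [deg]

lemma ordGE_mono {f : F2} {m m' : ℕ} (h : m' ≤ m) (hf : ordGE f m) : ordGE f m' :=
  fun d hd => hf d (lt_of_lt_of_le hd h)

lemma vf_ordGE_step {a b g : F2} {m : ℕ} (ha : ordGE a 2) (hb : ordGE b 2)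
    (hg : ordGE g m) : ordGE (vf a b g) (m + 1) := by
  intro d hd
  show MvPowerSeries.coeff d (a * pd 0 g + b * pd 1 g) = 0
  rw [map_add, MvPowerSeries.coeff_mul, MvPowerSeries.coeff_mul]
  have key : ∀ (c : F2) (i : Fin 2), ordGE c 2 →
      ∑ p ∈ Finset.HasAntidiagonal.antidiagonal d, MvPowerSeries.coeff p.1 c * MvPowerSeries.coeff p.2 (pd i g) = 0 := by
    intro c i hc
    refine Finset.sum_eq_zero fun p hp => ?_
    rw [Finset.HasAntidiagonal.mem_antidiagonal] at hp
    by_cases h1 : deg p.1 < 2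
    · rw [hc p.1 h1, zero_mul]
    · have h2 : g (p.2 + Finsupp.single i 1) = 0 := by
        apply hg
        rw [deg_add', deg_single']
        have hdd : deg p.1 + deg p.2 = deg d := by rw [← deg_add', hp]
        omega
      have : MvPowerSeries.coeff p.2 (pd i g) = 0 := by
        show ((p.2 i : ℂ) + 1) * MvPowerSeries.coeff (p.2 + Finsupp.single i 1) g = 0
        rw [coeff_def, h2, mul_zero]
      rw [this, mul_zero]
  rw [key a 0 ha, key b 1 hb, add_zero]

lemma ordGE_iter {a b : F2} (ha : ordGE a 2) (hb : ordGE b 2) (g : F2) :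
    ∀ j : ℕ, ordGE ((vf a b)^[j] g) j := by
  intro j
  induction j with
  | zero => intro d hd; omega
  | succ j ih =>
    rw [Function.iterate_succ_apply']
    exact vf_ordGE_step ha hb ih

lemma wOrdGE_step {A B g : F2} {m : ℕ} (hA : wOrdGE A 2) (hB : wOrdGE B 1)
    (hg : wOrdGE g m) : wOrdGE (vf A B g) (m + 1) := by
  intro d hd
  show (MvPowerSeries.coeff d) (A * pd 0 g + B * pd 1 g) = 0
  rw [map_add, MvPowerSeries.coeff_mul, MvPowerSeries.coeff_mul]
  have key : ∀ (c : F2) (i : Fin 2) (n s : ℕ), wOrdGE c n →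
      (∀ q : Fin 2 →₀ ℕ, ((q + Finsupp.single i 1 : Fin 2 →₀ ℕ)) 0 = q 0 + s) → s < n →
      ∑ p ∈ Finset.HasAntidiagonal.antidiagonal d, MvPowerSeries.coeff p.1 c * MvPowerSeries.coeff p.2 (pd i g) = 0 := by
    intro c i n s hc hsingle hs
    refine Finset.sum_eq_zero fun p hp => ?_
    rw [Finset.HasAntidiagonal.mem_antidiagonal] at hp
    by_cases h1 : p.1 0 < n
    · rw [coeff_def, hc p.1 h1, zero_mul]
    · have h2 : g (p.2 + Finsupp.single i 1) = 0 := by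
        apply hg
        have hd0 : p.1 0 + p.2 0 = d 0 := by
          have := congrArg (fun x => x 0) hp; simpa using this
        rw [hsingle p.2]
        omega
      have : MvPowerSeries.coeff p.2 (pd i g) = 0 := by
        show ((p.2 i : ℂ) + 1) * MvPowerSeries.coeff (p.2 + Finsupp.single i 1) g = 0
        rw [coeff_def, h2, mul_zero]
      rw [this, mul_zero]
  rw [key A 0 2 1 hA ?_ (by omega), key B 1 1 0 hB ?_ (by omega), add_zero]
  · intro q
    simp [Finsupp.add_apply, Finsupp.single_apply]
  · intro q
    simp [Finsupp.add_apply, Finsupp.single_apply]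

lemma wOrdGE_iter {A B : F2} (hA : wOrdGE A 2) (hB : wOrdGE B 1) (g : F2) :
    ∀ j : ℕ, wOrdGE ((vf A B)^[j] g) j := by
  intro j
  induction j with
  | zero => intro d hd; omega
  | succ j ih =>
    rw [Function.iterate_succ_apply']
    exact wOrdGE_step hA hB ih

lemma wOrdGE_mul {f g : F2} {m n : ℕ} (hf : wOrdGE f m) (hg : wOrdGE g n) :
    wOrdGE (f * g) (m + n) := by
  intro d hd
  show MvPowerSeries.coeff d (f * g) = 0
  rw [MvPowerSeries.coeff_mul]
  refine Finset.sum_eq_zero fun p hp => ?_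
  rw [Finset.HasAntidiagonal.mem_antidiagonal] at hp
  have hd0 : p.1 0 + p.2 0 = d 0 := by
    have := congrArg (fun x => x 0) hp; simpa using this
  by_cases h1 : p.1 0 < m
  · rw [coeff_def, hf p.1 h1, zero_mul]
  · rw [coeff_def (d := p.2), hg p.2 (by omega), mul_zero]

lemma eta (d : Fin 2 →₀ ℕ) : d = idx (d 0) (d 1) := (idx_eta d).symm

lemma blowup_def (f : F2) (d : Fin 2 →₀ ℕ) :
    blowup f d = if d 1 ≤ d 0 then f (idx (d 0 - d 1) (d 1)) else 0 := rfl

lemma blowup_add (f g : F2) : blowup (f + g) = blowup f + blowup g := by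
  funext d
  show blowup (f + g) d = blowup f d + blowup g d
  rw [blowup_def, blowup_def, blowup_def]
  by_cases hc : d 1 ≤ d 0 <;> simp [hc, add_def]

lemma blowup_sub (f g : F2) : blowup (f - g) = blowup f - blowup g := by
  funext d
  show blowup (f - g) d = blowup f d - blowup g d
  rw [blowup_def, blowup_def, blowup_def]
  by_cases hc : d 1 ≤ d 0 <;> simp [hc, sub_def]

lemma blowup_smul (c : ℂ) (f : F2) : blowup (c • f) = c • blowup f := by
  funext d
  show blowup (c • f) d = c * blowup f d
  rw [blowup_def, blowup_def]
  by_cases hc : d 1 ≤ d 0 <;> simp [hc, smul_def]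

lemma blowup_mul (f g : F2) : blowup (f * g) = blowup f * blowup g := by
  classical
  funext d
  rw [← coeff_def (blowup f * blowup g) d, MvPowerSeries.coeff_mul]
  by_cases hc : d 1 ≤ d 0
  · rw [blowup_def, if_pos hc, ← coeff_def (f * g), MvPowerSeries.coeff_mul]
    have step1 : ∑ p ∈ Finset.HasAntidiagonal.antidiagonal (idx (d 0 - d 1) (d 1)),
          (MvPowerSeries.coeff p.1) f * (MvPowerSeries.coeff p.2) g
        = ∑ p ∈ (Finset.HasAntidiagonal.antidiagonal d).filter
            (fun p : PP => p.1 1 ≤ p.1 0 ∧ p.2 1 ≤ p.2 0),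
            (fun p : PP => f (idx (p.1 0 - p.1 1) (p.1 1)) * g (idx (p.2 0 - p.2 1) (p.2 1))) p := by
      refine Finset.sum_nbij'
        (i := fun p : PP => ((idx (p.1 0 + p.1 1) (p.1 1), idx (p.2 0 + p.2 1) (p.2 1)) : PP))
        (j := fun p : PP => ((idx (p.1 0 - p.1 1) (p.1 1), idx (p.2 0 - p.2 1) (p.2 1)) : PP))
        ?_ ?_ ?_ ?_ ?_
      · intro p hp
        rw [Finset.HasAntidiagonal.mem_antidiagonal] at hp
        have h0 : p.1 0 + p.2 0 = d 0 - d 1 := by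
          have := congrArg (fun x => x 0) hp; simpa using this
        have h1 : p.1 1 + p.2 1 = d 1 := by
          have := congrArg (fun x => x 1) hp; simpa using this
        simp only [Finset.mem_filter, Finset.HasAntidiagonal.mem_antidiagonal]
        refine ⟨?_, by simp, by simp⟩
        rw [idx_add, eta d, idx_inj]
        omega
      · intro p hp
        simp only [Finset.mem_filter, Finset.HasAntidiagonal.mem_antidiagonal] at hp
        obtain ⟨hp, hA, hB⟩ := hp
        have h0 : p.1 0 + p.2 0 = d 0 := by
          have := congrArg (fun x => x 0) hp; simpa using this
        have h1 : p.1 1 + p.2 1 = d 1 := by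
          have := congrArg (fun x => x 1) hp; simpa using this
        rw [Finset.HasAntidiagonal.mem_antidiagonal, idx_add, idx_inj]
        omega
      · intro p hp
        simp only [idx_apply0, idx_apply1]
        rw [Prod.ext_iff]
        constructor
        · rw [show p.1 0 + p.1 1 - p.1 1 = p.1 0 by omega]
          exact (eta p.1).symm
        · rw [show p.2 0 + p.2 1 - p.2 1 = p.2 0 by omega]
          exact (eta p.2).symm
      · intro p hp
        simp only [Finset.mem_filter, Finset.HasAntidiagonal.mem_antidiagonal] at hp
        obtain ⟨hp, hA, hB⟩ := hp
        simp only [idx_apply0, idx_apply1]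
        rw [Prod.ext_iff]
        constructor
        · rw [show p.1 0 - p.1 1 + p.1 1 = p.1 0 by omega]
          exact (eta p.1).symm
        · rw [show p.2 0 - p.2 1 + p.2 1 = p.2 0 by omega]
          exact (eta p.2).symm
      · intro p hp
        show f p.1 * g p.2 = _
        simp only [idx_apply0, idx_apply1]
        rw [show p.1 0 + p.1 1 - p.1 1 = p.1 0 by omega,
            show p.2 0 + p.2 1 - p.2 1 = p.2 0 by omega,
            ← eta p.1, ← eta p.2]
    rw [step1, Finset.sum_filter]
    refine Finset.sum_congr rfl fun p hp => ?_
    rw [coeff_def, coeff_def, blowup_def, blowup_def]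
    by_cases hA : p.1 1 ≤ p.1 0 <;> by_cases hB : p.2 1 ≤ p.2 0 <;>
      simp [hA, hB]
  · rw [blowup_def, if_neg hc]
    symm
    refine Finset.sum_eq_zero fun p hp => ?_
    rw [Finset.HasAntidiagonal.mem_antidiagonal] at hp
    have h0 : p.1 0 + p.2 0 = d 0 := by
      have := congrArg (fun x => x 0) hp; simpa using this
    have h1 : p.1 1 + p.2 1 = d 1 := by
      have := congrArg (fun x => x 1) hp; simpa using this
    rw [coeff_def, coeff_def, blowup_def, blowup_def]
    by_cases hA : p.1 1 ≤ p.1 0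
    · rw [if_pos hA, if_neg (show ¬ p.2 1 ≤ p.2 0 by omega), mul_zero]
    · rw [if_neg hA, zero_mul]

lemma Xv_app (d : Fin 2 →₀ ℕ) : Xv d = if d = idx 1 0 then 1 else 0 := by
  rw [← coeff_def Xv d]
  show MvPowerSeries.coeff d (MvPowerSeries.X 0) = _
  classical
  rw [MvPowerSeries.coeff_X, single01]

lemma Yv_app (d : Fin 2 →₀ ℕ) : Yv d = if d = idx 0 1 then 1 else 0 := by
  rw [← coeff_def Yv d]
  show MvPowerSeries.coeff d (MvPowerSeries.X 1) = _
  classical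
  rw [MvPowerSeries.coeff_X, single11]

lemma coeff_X0_mul (h : F2) (d : Fin 2 →₀ ℕ) :
    (Xv * h) d = if 1 ≤ d 0 then h (idx (d 0 - 1) (d 1)) else 0 := by
  rw [← coeff_def (Xv * h) d]
  show MvPowerSeries.coeff d (MvPowerSeries.X 0 * h) = _
  rw [MvPowerSeries.X, MvPowerSeries.coeff_monomial_mul, single01]
  by_cases hc : 1 ≤ d 0
  · rw [if_pos (by rw [eta d, idx_le]; constructor <;> omega), if_pos hc, one_mul]
    rw [coeff_def]
    congr 1
    rw [eta d, idx_sub]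
    simp
  · rw [if_neg ?_, if_neg hc]
    rw [eta d, idx_le]
    omega

lemma coeff_X1_mul (h : F2) (d : Fin 2 →₀ ℕ) :
    (Yv * h) d = if 1 ≤ d 1 then h (idx (d 0) (d 1 - 1)) else 0 := by
  rw [← coeff_def (Yv * h) d]
  show MvPowerSeries.coeff d (MvPowerSeries.X 1 * h) = _
  rw [MvPowerSeries.X, MvPowerSeries.coeff_monomial_mul, single11]
  by_cases hc : 1 ≤ d 1
  · rw [if_pos (by rw [eta d, idx_le]; constructor <;> omega), if_pos hc, one_mul]
    rw [coeff_def]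
    congr 1
    rw [eta d, idx_sub]
    simp
  · rw [if_neg ?_, if_neg hc]
    rw [eta d, idx_le]
    omega

lemma blowup_Xv : blowup Xv = Xv := by
  funext d
  rw [blowup_def]
  by_cases hc : d 1 ≤ d 0
  · rw [if_pos hc, Xv_app (idx (d 0 - d 1) (d 1)), Xv_app d]
    by_cases h1 : d 0 = 1 ∧ d 1 = 0
    · rw [if_pos (by rw [idx_inj]; omega), if_pos (by rw [eta d, idx_inj]; omega)]
    · rw [if_neg (by rw [idx_inj]; omega), if_neg (by rw [eta d, idx_inj]; omega)]
  · rw [if_neg hc, Xv_app d, if_neg (by rw [eta d, idx_inj]; omega)]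

lemma blowup_Yv : blowup Yv = Xv * Yv := by
  funext d
  rw [blowup_def, coeff_X0_mul Yv d]
  by_cases hc : d 1 ≤ d 0
  · rw [if_pos hc, Yv_app]
    by_cases h0 : 1 ≤ d 0
    · rw [if_pos h0, Yv_app]
      by_cases hx : d 0 = 1 ∧ d 1 = 1
      · rw [if_pos (by rw [idx_inj]; omega), if_pos (by rw [idx_inj]; omega)]
      · rw [if_neg (by rw [idx_inj]; omega), if_neg (by rw [idx_inj]; omega)]
    · rw [if_neg h0, if_neg (by rw [idx_inj]; omega)]
  · rw [if_neg hc]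
    by_cases h0 : 1 ≤ d 0
    · rw [if_pos h0, Yv_app, if_neg (by rw [idx_inj]; omega)]
    · rw [if_neg h0]

lemma pd_app (i : Fin 2) (f : F2) (e : Fin 2 →₀ ℕ) :
    pd i f e = ((e i : ℂ) + 1) * f (e + Finsupp.single i 1) := rfl

lemma add_e1_0 (d : Fin 2 →₀ ℕ) : ((d + Finsupp.single 1 1 : Fin 2 →₀ ℕ)) 0 = d 0 := by
  simp [Finsupp.add_apply, Finsupp.single_apply]
lemma add_e1_1 (d : Fin 2 →₀ ℕ) : ((d + Finsupp.single 1 1 : Fin 2 →₀ ℕ)) 1 = d 1 + 1 := by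
  simp [Finsupp.add_apply, Finsupp.single_apply]
lemma add_e0_0 (d : Fin 2 →₀ ℕ) : ((d + Finsupp.single 0 1 : Fin 2 →₀ ℕ)) 0 = d 0 + 1 := by
  simp [Finsupp.add_apply, Finsupp.single_apply]
lemma add_e0_1 (d : Fin 2 →₀ ℕ) : ((d + Finsupp.single 0 1 : Fin 2 →₀ ℕ)) 1 = d 1 := by
  simp [Finsupp.add_apply, Finsupp.single_apply]

lemma idx_add_e1 (m n : ℕ) : idx m n + Finsupp.single 1 1 = idx m (n + 1) := by
  rw [single11, idx_add, Nat.add_zero]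
lemma idx_add_e0 (m n : ℕ) : idx m n + Finsupp.single 0 1 = idx (m + 1) n := by
  rw [single01, idx_add]
  norm_num

lemma chain1 (g : F2) : pd 1 (blowup g) = Xv * blowup (pd 1 g) := by
  funext d
  rw [pd_app, blowup_def, coeff_X0_mul, add_e1_0, add_e1_1]
  by_cases h1 : d 1 + 1 ≤ d 0
  · rw [if_pos h1, if_pos (by omega), blowup_def, idx_apply0, idx_apply1,
      if_pos (by omega), pd_app, idx_apply1, idx_add_e1,
      show d 0 - 1 - d 1 = d 0 - (d 1 + 1) by omega]
  · rw [if_neg h1, mul_zero]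
    by_cases h0 : 1 ≤ d 0
    · rw [if_pos h0, blowup_def, idx_apply0, idx_apply1, if_neg (by omega)]
    · rw [if_neg h0]

lemma chain0 (g : F2) :
    pd 0 (blowup g) = blowup (pd 0 g) + Yv * blowup (pd 1 g) := by
  funext d
  rw [add_def, pd_app, blowup_def (f := g), coeff_X1_mul, add_e0_0, add_e0_1, blowup_def (f := pd 0 g)]
  by_cases hc : d 1 ≤ d 0
  · rw [if_pos (by omega : d 1 ≤ d 0 + 1), if_pos hc, pd_app, idx_apply0, idx_add_e0]
    by_cases h1 : 1 ≤ d 1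
    · rw [if_pos h1, blowup_def, idx_apply0, idx_apply1, if_pos (by omega), pd_app,
        idx_apply1, idx_add_e1,
        show d 0 - (d 1 - 1) = d 0 - d 1 + 1 by omega,
        show d 1 - 1 + 1 = d 1 by omega,
        show d 0 + 1 - d 1 = d 0 - d 1 + 1 by omega]
      rw [show ((d 0 : ℂ) + 1) = ((d 0 - d 1 : ℕ) : ℂ) + 1 + ((d 1 - 1 : ℕ) : ℂ) + 1 by
        rw [Nat.cast_sub hc, Nat.cast_sub h1]; push_cast; ring]
      ring
    · rw [if_neg h1, add_zero,
        show d 0 + 1 - d 1 = d 0 - d 1 + 1 by omega,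
        show d 1 = 0 by omega, Nat.sub_zero]
  · rw [if_neg hc]
    by_cases h2 : d 1 ≤ d 0 + 1
    · -- d 1 = d 0 + 1
      have hd1 : d 1 = d 0 + 1 := by omega
      rw [if_pos h2, if_pos (by omega : 1 ≤ d 1), blowup_def, idx_apply0, idx_apply1,
        if_pos (by omega), pd_app, idx_apply1, idx_add_e1,
        show d 0 - (d 1 - 1) = 0 by omega,
        show d 1 - 1 + 1 = d 1 by omega,
        show d 0 + 1 - d 1 = 0 by omega, zero_add]
      rw [show ((d 0 : ℂ) + 1) = ((d 1 - 1 : ℕ) : ℂ) + 1 by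
        rw [show d 1 - 1 = d 0 by omega]]
    · rw [if_neg h2, mul_zero, zero_add]
      rw [if_pos (by omega : 1 ≤ d 1), blowup_def, idx_apply0, idx_apply1, if_neg (by omega)]

lemma blowup_vf (aT bT at' bt' : F2)
    (hat : at' = blowup aT)
    (hbt : Xv * bt' = blowup bT - Yv * blowup aT) (g : F2) :
    vf at' bt' (blowup g) = blowup (vf aT bT g) := by
  unfold vf
  rw [chain0, chain1, blowup_add, blowup_mul, blowup_mul, hat]
  have : bt' * (Xv * blowup (pd 1 g)) = (Xv * bt') * blowup (pd 1 g) := by ring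
  rw [this, hbt]
  ring

lemma blowup_vf_iter (aT bT at' bt' : F2)
    (hat : at' = blowup aT)
    (hbt : Xv * bt' = blowup bT - Yv * blowup aT) (g : F2) (j : ℕ) :
    (vf at' bt')^[j] (blowup g) = blowup ((vf aT bT)^[j] g) := by
  induction j with
  | zero => rfl
  | succ j ih =>
    rw [Function.iterate_succ_apply', Function.iterate_succ_apply', ih,
      blowup_vf aT bT at' bt' hat hbt]

lemma blowup_expX (aT bT at' bt' : F2)
    (hat : at' = blowup aT)
    (hbt : Xv * bt' = blowup bT - Yv * blowup aT) (g : F2) :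
    expX at' bt' (blowup g) = blowup (expX aT bT g) := by
  funext d
  show ∑' j : ℕ, ((j.factorial : ℂ))⁻¹ * MvPowerSeries.coeff d ((vf at' bt')^[j] (blowup g))
    = blowup (expX aT bT g) d
  rw [blowup_def]
  by_cases hc : d 1 ≤ d 0
  · rw [if_pos hc]
    show _ = ∑' j : ℕ, ((j.factorial : ℂ))⁻¹
      * MvPowerSeries.coeff (idx (d 0 - d 1) (d 1)) ((vf aT bT)^[j] g)
    refine tsum_congr fun j => ?_
    rw [blowup_vf_iter aT bT at' bt' hat hbt g j, coeff_def, blowup_def, if_pos hc, coeff_def]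
  · rw [if_neg hc]
    have : ∀ j : ℕ, ((j.factorial : ℂ))⁻¹ * MvPowerSeries.coeff d ((vf at' bt')^[j] (blowup g)) = 0 := by
      intro j
      rw [blowup_vf_iter aT bT at' bt' hat hbt g j, coeff_def, blowup_def, if_neg hc, mul_zero]
    rw [tsum_congr this, tsum_zero]

lemma shear_ordGE {f : F2} {m : ℕ} (v0 : ℂ) (hf : ordGE f m) : ordGE (shear v0 f) m := by
  intro d hd
  show shear v0 f d = 0
  refine Finset.sum_eq_zero fun j hj => ?_
  by_cases hcond : d 1 ≤ j ∧ j - d 1 ≤ d 0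
  · rw [if_pos hcond]
    rw [hf (idx (d 0 - (j - d 1)) j) ?_, mul_zero]
    rw [deg_idx]
    unfold deg at hd
    omega
  · rw [if_neg hcond]

lemma ordGE_sub {f g : F2} {m : ℕ} (hf : ordGE f m) (hg : ordGE g m) : ordGE (f - g) m := by
  intro d hd
  show (f - g) d = 0
  rw [sub_def, show f d = 0 from hf d hd, show g d = 0 from hg d hd, sub_zero]

lemma ordGE_smul {f : F2} {m : ℕ} (c : ℂ) (hf : ordGE f m) : ordGE (c • f) m := by
  intro d hd
  show (c • f) d = 0
  rw [smul_def, show f d = 0 from hf d hd, mul_zero]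

lemma blowup_wOrd {f : F2} {m : ℕ} (hf : ordGE f m) : wOrdGE (blowup f) m := by
  intro d hd
  rw [blowup_def]
  by_cases hc : d 1 ≤ d 0
  · rw [if_pos hc,
      show f (idx (d 0 - d 1) (d 1)) = 0 from hf _ (by rw [deg_idx]; omega)]
  · rw [if_neg hc]

lemma bt'_wOrd {aT bT bt' : F2} (haT : ordGE aT 2) (hbT : ordGE bT 2)
    (hbt : Xv * bt' = blowup bT - Yv * blowup aT) : wOrdGE bt' 1 := by
  intro d hd
  have hd0 : d 0 = 0 := by omega
  have key : bt' d = (Xv * bt') (idx 1 (d 1)) := by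
    rw [coeff_X0_mul, idx_apply0, idx_apply1, if_pos le_rfl, Nat.sub_self]
    conv_lhs => rw [eta d, hd0]
  rw [key, hbt, sub_def, blowup_def, idx_apply0, idx_apply1, coeff_X1_mul, idx_apply0, idx_apply1]
  have h1 : (if d 1 ≤ 1 then bT (idx (1 - d 1) (d 1)) else 0) = 0 := by
    by_cases hc : d 1 ≤ 1
    · rw [if_pos hc,
        show bT (idx (1 - d 1) (d 1)) = 0 from hbT _ (by rw [deg_idx]; omega)]
    · rw [if_neg hc]
  have h2 : (if 1 ≤ d 1 then blowup aT (idx 1 (d 1 - 1)) else 0) = 0 := by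
    by_cases hc : 1 ≤ d 1
    · rw [if_pos hc, blowup_def, idx_apply0, idx_apply1]
      by_cases hc2 : d 1 - 1 ≤ 1
      · rw [if_pos hc2,
          show aT (idx (1 - (d 1 - 1)) (d 1 - 1)) = 0 from haT _ (by rw [deg_idx]; omega)]
      · rw [if_neg hc2]
    · rw [if_neg hc]
  rw [h1, h2, sub_zero]

lemma expX_coeff_fin (a b g : F2) (d : Fin 2 →₀ ℕ) (N : ℕ)
    (h : ∀ j, N ≤ j → ((vf a b)^[j] g) d = 0) :
    expX a b g d = ∑ j ∈ Finset.range N, ((j.factorial : ℂ))⁻¹ * ((vf a b)^[j] g) d := by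
  show ∑' j : ℕ, ((j.factorial : ℂ))⁻¹ * MvPowerSeries.coeff d ((vf a b)^[j] g) = _
  rw [tsum_eq_sum (s := Finset.range N)]
  · rfl
  · intro j hj
    rw [Finset.mem_range, not_lt] at hj
    rw [coeff_def, h j hj, mul_zero]

lemma tri_sq (M : ℕ) (G : ℕ → ℕ → ℂ) (hG : ∀ i l, M ≤ i + l → G i l = 0) :
    ∑ j ∈ Finset.range (2 * M), ∑ i ∈ Finset.range (j + 1), G i (j - i)
      = ∑ i ∈ Finset.range M, ∑ l ∈ Finset.range M, G i l := by
  classical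
  rw [Finset.sum_sigma' (Finset.range (2 * M)) (fun j => Finset.range (j + 1))
    (fun j i => G i (j - i))]
  rw [Finset.sum_sigma' (Finset.range M) (fun _ => Finset.range M) (fun i l => G i l)]
  rw [← Finset.sum_filter_of_ne
    (p := fun x : (_ : ℕ) × ℕ => x.1 + x.2 < M)
    (s := (Finset.range M).sigma (fun _ => Finset.range M))
    (f := fun x => G x.1 x.2)
    (by intro x hx hne; by_contra hc; exact hne (hG x.1 x.2 (by omega)))]
  rw [← Finset.sum_filter_of_ne
    (p := fun x : (_ : ℕ) × ℕ => x.1 < M)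
    (s := (Finset.range (2 * M)).sigma (fun j => Finset.range (j + 1)))
    (f := fun x => G x.2 (x.1 - x.2))
    (by
      intro x hx hne
      simp only [Finset.mem_sigma, Finset.mem_range] at hx
      by_contra hc
      exact hne (hG x.2 (x.1 - x.2) (by omega)))]
  refine Finset.sum_nbij' (i := fun x => ⟨x.2, x.1 - x.2⟩) (j := fun x => ⟨x.1 + x.2, x.1⟩)
    ?_ ?_ ?_ ?_ ?_
  · intro x hx
    simp only [Finset.mem_filter, Finset.mem_sigma, Finset.mem_range] at hx ⊢
    omega
  · intro x hx
    simp only [Finset.mem_filter, Finset.mem_sigma, Finset.mem_range] at hx ⊢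
    omega
  · intro x hx
    simp only [Finset.mem_filter, Finset.mem_sigma, Finset.mem_range] at hx
    have h1 : x.2 + (x.1 - x.2) = x.1 := by omega
    exact Sigma.ext h1 (by simp)
  · intro x hx
    have h1 : x.1 + x.2 - x.1 = x.2 := by omega
    exact Sigma.ext rfl (by simp [h1])
  · intro x hx
    rfl

lemma factorial_inv_choose (j i : ℕ) (h : i ≤ j) :
    ((j.factorial : ℂ))⁻¹ * (j.choose i : ℂ)
      = ((i.factorial : ℂ))⁻¹ * (((j - i).factorial : ℂ))⁻¹ := by
  have key : (j.choose i) * i.factorial * (j - i).factorial = j.factorial :=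
    Nat.choose_mul_factorial_mul_factorial h
  have keyC : ((j.choose i : ℂ)) * (i.factorial : ℂ) * ((j - i).factorial : ℂ)
      = (j.factorial : ℂ) := by exact_mod_cast congrArg (Nat.cast : ℕ → ℂ) key
  have h1 : (i.factorial : ℂ) ≠ 0 := Nat.cast_ne_zero.2 i.factorial_ne_zero
  have h2 : ((j - i).factorial : ℂ) ≠ 0 := Nat.cast_ne_zero.2 (j - i).factorial_ne_zero
  have h3 : (j.factorial : ℂ) ≠ 0 := Nat.cast_ne_zero.2 j.factorial_ne_zero
  field_simp
  linear_combination keyC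

lemma expX_mul (A B : F2) (hA : wOrdGE A 2) (hB : wOrdGE B 1) (f g : F2) :
    expX A B (f * g) = expX A B f * expX A B g := by
  funext d
  set N := d 0 + 1 with hN
  have hiter : ∀ (h : F2) (j : ℕ), wOrdGE ((vf A B)^[j] h) j := fun h j => wOrdGE_iter hA hB h j
  set G : ℕ → ℕ → ℂ := fun i l =>
    ((i.factorial : ℂ))⁻¹ * (((l.factorial : ℂ))⁻¹)
      * ((vf A B)^[i] f * (vf A B)^[l] g) d with hG
  have hGzero : ∀ i l, N ≤ i + l → G i l = 0 := by
    intro i l hil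
    have : ((vf A B)^[i] f * (vf A B)^[l] g) d = 0 :=
      wOrdGE_mul (hiter f i) (hiter g l) d (by omega)
    rw [hG]
    simp only [this, mul_zero]
  -- LHS
  have hLHS : expX A B (f * g) d
      = ∑ j ∈ Finset.range (2 * N), ∑ i ∈ Finset.range (j + 1), G i (j - i) := by
    rw [expX_coeff_fin A B (f * g) d (2 * N)
      (fun j hj => hiter (f * g) j d (by omega))]
    refine Finset.sum_congr rfl fun j hj => ?_
    rw [iter_leibniz]
    rw [← coeff_def (∑ i ∈ Finset.range (j + 1),
        (j.choose i : ℂ) • ((vf A B)^[i] f * (vf A B)^[j - i] g)) d, map_sum, Finset.mul_sum]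
    refine Finset.sum_congr rfl fun i hi => ?_
    rw [Finset.mem_range] at hi
    rw [coeff_def, smul_def]
    show _ = ((i.factorial : ℂ))⁻¹ * ((((j - i).factorial : ℂ))⁻¹)
      * (((vf A B)^[i] f * (vf A B)^[j - i] g) d)
    rw [← factorial_inv_choose j i (by omega)]
    ring
  have hSF : ∀ (h : F2) (e : Fin 2 →₀ ℕ), e 0 < N →
      expX A B h e = (∑ i ∈ Finset.range N, ((i.factorial : ℂ))⁻¹ • (vf A B)^[i] h) e := by
    intro h e he
    rw [expX_coeff_fin A B h e N (fun j hj => hiter h j e (by omega))]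
    rw [← coeff_def (∑ i ∈ Finset.range N, ((i.factorial : ℂ))⁻¹ • (vf A B)^[i] h) e, map_sum]
    exact Finset.sum_congr rfl fun i _ => by rw [coeff_def, smul_def]
  have hRHS : (expX A B f * expX A B g) d
      = ∑ i ∈ Finset.range N, ∑ l ∈ Finset.range N, G i l := by
    have h1 : (expX A B f * expX A B g) d
        = ((∑ i ∈ Finset.range N, ((i.factorial : ℂ))⁻¹ • (vf A B)^[i] f)
          * (∑ l ∈ Finset.range N, ((l.factorial : ℂ))⁻¹ • (vf A B)^[l] g)) d := by
      rw [← coeff_def (expX A B f * expX A B g) d, MvPowerSeries.coeff_mul,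
        ← coeff_def ((∑ i ∈ Finset.range N, ((i.factorial : ℂ))⁻¹ • (vf A B)^[i] f)
          * (∑ l ∈ Finset.range N, ((l.factorial : ℂ))⁻¹ • (vf A B)^[l] g)) d,
        MvPowerSeries.coeff_mul]
      refine Finset.sum_congr rfl fun p hp => ?_
      rw [Finset.HasAntidiagonal.mem_antidiagonal] at hp
      have hp0 : p.1 0 + p.2 0 = d 0 := by
        have := congrArg (fun x => x 0) hp; simpa using this
      rw [coeff_def, coeff_def, coeff_def, coeff_def,
        hSF f p.1 (by omega), hSF g p.2 (by omega)]
    rw [h1, Finset.sum_mul_sum,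
      ← coeff_def (∑ i ∈ Finset.range N, ∑ l ∈ Finset.range N,
        ((i.factorial : ℂ))⁻¹ • (vf A B)^[i] f * (((l.factorial : ℂ))⁻¹ • (vf A B)^[l] g)) d,
      map_sum]
    refine Finset.sum_congr rfl fun i _ => ?_
    rw [map_sum]
    refine Finset.sum_congr rfl fun l _ => ?_
    have hsm : ((i.factorial : ℂ))⁻¹ • (vf A B)^[i] f * (((l.factorial : ℂ))⁻¹ • (vf A B)^[l] g)
        = (((i.factorial : ℂ))⁻¹ * ((l.factorial : ℂ))⁻¹) • ((vf A B)^[i] f * (vf A B)^[l] g) := by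
      rw [smul_mul_assoc, mul_smul_comm, smul_smul]
    rw [hsm, coeff_def, smul_def]
  rw [hLHS, hRHS, tri_sq N G hGzero]

end

noncomputable section

/-- commutation of Exp with blow-up.  At a characteristic direction
p = (0,v0) of F = Exp(X) (equivalently a point of the tangent cone of X), the germ of the lift
F̃ at p equals Exp of the germ of the pullback X̃ at p.  Germs at (0,v0) are computed via the
linear change `shear v0`; aT, bT are the coefficients of the germ of X, at', bt' those of X̃ at p,
and the lift of Exp(X) is characterized by its components A = F₁(x,xv), A·B = F₂(x,xv). -/
theorem Exp_commutes_with_blowup (a b : F2) (k : ℕ) (hk : 2 ≤ k)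
    (ha : ordGE a k) (hb : ordGE b k)
    (v0 : ℂ) (hchar : evk k v0 b = v0 * evk k v0 a)
    (aT bT at' bt' : F2)
    (haT : aT = shear v0 a) (hbT : bT = shear v0 b - v0 • shear v0 a)
    (hat : at' = blowup aT)
    (hbt : Xv * bt' = blowup bT - Yv * blowup aT) :
    expX at' bt' Xv = blowup (expX aT bT Xv) ∧
    expX at' bt' Xv * expX at' bt' Yv = blowup (expX aT bT Yv) := by
  have ha2 : ordGE a 2 := ordGE_mono hk ha
  have hb2 : ordGE b 2 := ordGE_mono hk hb
  have haT2 : ordGE aT 2 := haT ▸ shear_ordGE v0 ha2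
  have hbT2 : ordGE bT 2 :=
    hbT ▸ ordGE_sub (shear_ordGE v0 hb2) (ordGE_smul v0 (shear_ordGE v0 ha2))
  have hA : wOrdGE at' 2 := hat ▸ blowup_wOrd haT2
  have hB : wOrdGE bt' 1 := bt'_wOrd haT2 hbT2 hbt
  constructor
  · conv_lhs => rw [← blowup_Xv]
    exact blowup_expX aT bT at' bt' hat hbt Xv
  · rw [← expX_mul at' bt' hA hB Xv Yv, show Xv * Yv = blowup Yv from blowup_Yv.symm]
    exact blowup_expX aT bT at' bt' hat hbt Yv

end
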